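/- Let (A, B, C) be a recollement of triangulated categories with functors i^*, i_*, i^!, j_!, j^*, j_*. Let (T1, F1) and (T2, F2) be t-structures in A and C, respectively. Set T = {B ∈ B | i^*(B) ∈ T1 and j^*(B) ∈ T2} and F = {B ∈ B | i^!(B) ∈ F1 and j^*(B) ∈ F2}. Then (T, F) is a t-structure in B. -/

import Mathlib

open CategoryTheory CategoryTheory.Limits CategoryTheory.Pretriangulated

namespace RecollementFS

variable (A B C : Type*) [Category A] [Category B] [Category C]
  [Preadditive A] [Preadditive B] [Preadditive C]
  [HasZeroObject A] [HasZeroObject B] [HasZeroObject C]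
  [HasShift A ℤ] [HasShift B ℤ] [HasShift C ℤ]
  [∀ n : ℤ, (shiftFunctor A n).Additive] [∀ n : ℤ, (shiftFunctor B n).Additive]
  [∀ n : ℤ, (shiftFunctor C n).Additive]
  [Pretriangulated A] [Pretriangulated B] [Pretriangulated C]

/-- A recollement of triangulated categories `(A, B, C)`. -/
structure TriangulatedRecollement where
  /-- `i_* : A ⥤ B` -/
  iStar : A ⥤ B
  /-- `i^* : B ⥤ A` -/
  iUpperStar : B ⥤ A
  /-- `i^! : B ⥤ A` -/
  iShriek : B ⥤ A
  /-- `j^* : B ⥤ C` -/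
  jUpperStar : B ⥤ C
  /-- `j_! : C ⥤ B` -/
  jShriek : C ⥤ B
  /-- `j_* : C ⥤ B` -/
  jStar : C ⥤ B
  iStar_commShift : iStar.CommShift ℤ
  iUpperStar_commShift : iUpperStar.CommShift ℤ
  iShriek_commShift : iShriek.CommShift ℤ
  jUpperStar_commShift : jUpperStar.CommShift ℤ
  jShriek_commShift : jShriek.CommShift ℤ
  jStar_commShift : jStar.CommShift ℤ
  iStar_triangulated : letI := iStar_commShift; iStar.IsTriangulated
  iUpperStar_triangulated : letI := iUpperStar_commShift; iUpperStar.IsTriangulated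
  iShriek_triangulated : letI := iShriek_commShift; iShriek.IsTriangulated
  jUpperStar_triangulated : letI := jUpperStar_commShift; jUpperStar.IsTriangulated
  jShriek_triangulated : letI := jShriek_commShift; jShriek.IsTriangulated
  jStar_triangulated : letI := jStar_commShift; jStar.IsTriangulated
  /-- `i^* ⊣ i_*` -/
  adj₁ : iUpperStar ⊣ iStar
  /-- `i_* ⊣ i^!` -/
  adj₂ : iStar ⊣ iShriek
  /-- `j_! ⊣ j^*` -/
  adj₃ : jShriek ⊣ jUpperStar
  /-- `j^* ⊣ j_*` -/
  adj₄ : jUpperStar ⊣ jStar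
  iStar_full : iStar.Full
  iStar_faithful : iStar.Faithful
  jShriek_full : jShriek.Full
  jShriek_faithful : jShriek.Faithful
  jStar_full : jStar.Full
  jStar_faithful : jStar.Faithful
  /-- `j^*(X) ≅ 0` iff `X` lies in the essential image of `i_*`. -/
  isZero_iff : ∀ X : B, IsZero (jUpperStar.obj X) ↔ ∃ Y : A, Nonempty (iStar.obj Y ≅ X)
  /-- the distinguished triangle `i_* i^! X ⟶ X ⟶ j_* j^* X ⟶ (i_* i^! X)⟦1⟧`. -/
  triangle₁ : ∀ X : B, ∃ h : jStar.obj (jUpperStar.obj X) ⟶ (iStar.obj (iShriek.obj X))⟦(1 : ℤ)⟧,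
    Triangle.mk (adj₂.counit.app X) (adj₄.unit.app X) h ∈ distTriang B
  /-- the distinguished triangle `j_! j^* X ⟶ X ⟶ i_* i^* X ⟶ (j_! j^* X)⟦1⟧`. -/
  triangle₂ : ∀ X : B, ∃ h : iStar.obj (iUpperStar.obj X) ⟶ (jShriek.obj (jUpperStar.obj X))⟦(1 : ℤ)⟧,
    Triangle.mk (adj₃.counit.app X) (adj₁.unit.app X) h ∈ distTriang B

variable {𝒟 : Type*} [Category 𝒟] [Preadditive 𝒟] [HasZeroObject 𝒟]
  [HasShift 𝒟 ℤ] [∀ n : ℤ, (shiftFunctor 𝒟 n).Additive] [Pretriangulated 𝒟]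

/-- A `t`-structure `(U, V)` in a triangulated category. -/
structure IsTStructure (U V : Set 𝒟) : Prop where
  isoClosed_left : ∀ {X Y : 𝒟}, (X ≅ Y) → X ∈ U → Y ∈ U
  isoClosed_right : ∀ {X Y : 𝒟}, (X ≅ Y) → X ∈ V → Y ∈ V
  exists_triangle : ∀ X : 𝒟, ∃ (U' V' : 𝒟) (_ : U' ∈ U) (_ : V' ∈ V)
      (f : U' ⟶ X) (g : X ⟶ V') (h : V' ⟶ U'⟦(1 : ℤ)⟧),
      Triangle.mk f g h ∈ distTriang 𝒟
  hom_zero : ∀ {X Y : 𝒟}, X ∈ U → Y ∈ V → ∀ f : X ⟶ Y, f = 0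
  shift_mem : ∀ {X : 𝒟}, X ∈ U → X⟦(1 : ℤ)⟧ ∈ U

section Aux

variable {𝒟 : Type*} [Category 𝒟] [Preadditive 𝒟] [HasZeroObject 𝒟]
  [HasShift 𝒟 ℤ] [∀ n : ℤ, (shiftFunctor 𝒟 n).Additive] [Pretriangulated 𝒟]

/-- Two distinguished triangles with isomorphic `mor₂`-arrows have isomorphic
first objects. -/
lemma nonempty_iso₁_aux {T T' : Triangle 𝒟} (hT : T ∈ distTriang 𝒟)
    (hT' : T' ∈ distTriang 𝒟) (b : T.obj₂ ≅ T'.obj₂) (c : T.obj₃ ≅ T'.obj₃)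
    (comm : T.mor₂ ≫ c.hom = b.hom ≫ T'.mor₂) :
    Nonempty (T.obj₁ ≅ T'.obj₁) := by
  obtain ⟨a, ha₁, ha₂⟩ :=
    complete_distinguished_triangle_morphism₁ T T' hT hT' b.hom c.hom comm
  have : IsIso a := by
    exact isIso₁_of_isIso₂₃
      { hom₁ := a, hom₂ := b.hom, hom₃ := c.hom,
        comm₁ := ha₁, comm₂ := comm, comm₃ := ha₂ } hT hT'
      (by dsimp; infer_instance) (by dsimp; infer_instance)
  exact ⟨asIso a⟩

/-- The right class of a `t`-structure contains every object that receives only zero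
morphisms from the left class. -/
lemma IsTStructure.mem_right_of_homzero {U V : Set 𝒟} (h : IsTStructure U V) {Y : 𝒟}
    (hY : ∀ X, X ∈ U → ∀ f : X ⟶ Y, f = 0) : Y ∈ V := by
  obtain ⟨U', V', hU', hV', f, g, w, hT⟩ := h.exists_triangle Y
  obtain ⟨e, he⟩ := Triangle.coyoneda_exact₂ _ (inv_rot_of_distTriang _ hT) (𝟙 U')
    (by
        exact hY U' hU' _)
  have he0 : e = 0 := by
    have h1 : (shiftFunctor 𝒟 (1 : ℤ)).map e ≫ (shiftNegShift V' (1 : ℤ)).hom = 0 :=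
      h.hom_zero (h.shift_mem hU') hV' _
    have h2 : (shiftFunctor 𝒟 (1 : ℤ)).map e = 0 := by
      exact ((Category.assoc _ _ _).trans ((congrArg (fun k => (shiftFunctor 𝒟 (1 : ℤ)).map e ≫ k) (Iso.hom_inv_id (shiftNegShift V' (1 : ℤ)))).trans (Category.comp_id _))).symm.trans
        ((congrArg (· ≫ (shiftNegShift V' (1 : ℤ)).inv) h1).trans Limits.zero_comp)
    exact (shiftFunctor 𝒟 (1 : ℤ)).map_injective (by rw [h2, Functor.map_zero])
  have hid : 𝟙 U' = 0 := by rw [he, he0, Limits.zero_comp]; rfl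
  have hz : IsZero ((Triangle.mk f g w).obj₁) := (IsZero.iff_id_eq_zero U').2 hid
  have : IsIso ((Triangle.mk f g w).mor₂) :=
    (Triangle.isZero₁_iff_isIso₂ _ hT).1 hz
  exact h.isoClosed_right (asIso ((Triangle.mk f g w).mor₂)).symm hV'

end Aux


/-- gluing `t`-structures along a recollement of triangulated
categories. -/
theorem glue_tStructure_of_recollement
    (R : TriangulatedRecollement A B C)
    (T₁ F₁ : Set A) (T₂ F₂ : Set C)
    (hA : IsTStructure T₁ F₁) (hC : IsTStructure T₂ F₂) :
    IsTStructure
      {X : B | R.iUpperStar.obj X ∈ T₁ ∧ R.jUpperStar.obj X ∈ T₂}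
      {X : B | R.iShriek.obj X ∈ F₁ ∧ R.jUpperStar.obj X ∈ F₂} := by
  haveI := R.iStar_full; haveI := R.iStar_faithful
  haveI := R.jStar_full; haveI := R.jStar_faithful
  haveI := R.jShriek_full; haveI := R.jShriek_faithful
  letI := R.iStar_commShift; letI := R.iUpperStar_commShift; letI := R.iShriek_commShift
  letI := R.jUpperStar_commShift; letI := R.jShriek_commShift; letI := R.jStar_commShift
  haveI : R.iStar.IsTriangulated := R.iStar_triangulated
  haveI : R.iUpperStar.IsTriangulated := R.iUpperStar_triangulated
  haveI : R.iShriek.IsTriangulated := R.iShriek_triangulated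
  haveI : R.jUpperStar.IsTriangulated := R.jUpperStar_triangulated
  haveI : R.jShriek.IsTriangulated := R.jShriek_triangulated
  haveI : R.jStar.IsTriangulated := R.jStar_triangulated
  -- `j^* i_* = 0`
  have hzero_ji : ∀ Y : A, IsZero (R.jUpperStar.obj (R.iStar.obj Y)) :=
    fun Y => (R.isZero_iff _).2 ⟨Y, ⟨Iso.refl _⟩⟩
  -- zero morphisms out of `i_*` via `adj₂`
  have hi2 : ∀ (W' : A) (Y : B), (∀ ψ : W' ⟶ R.iShriek.obj Y, ψ = 0) →
      ∀ φ : R.iStar.obj W' ⟶ Y, φ = 0 := by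
    intro W' Y hψ φ
    have h0 : R.adj₂.homEquiv W' Y φ = 0 := hψ _
    have h1 := (R.adj₂.homEquiv W' Y).symm_apply_apply φ
    rw [h0] at h1
    rw [← h1, Adjunction.homEquiv_counit, Functor.map_zero, Limits.zero_comp]
  -- zero morphisms out of `j_!` via `adj₃`
  have hj3 : ∀ (S : C) (Y : B), (∀ ψ : S ⟶ R.jUpperStar.obj Y, ψ = 0) →
      ∀ φ : R.jShriek.obj S ⟶ Y, φ = 0 := by
    intro S Y hψ φ
    have h0 : R.adj₃.homEquiv S Y φ = 0 := hψ _
    have h1 := (R.adj₃.homEquiv S Y).symm_apply_apply φ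
    rw [h0] at h1
    rw [← h1, Adjunction.homEquiv_counit, Functor.map_zero, Limits.zero_comp]
  -- zero morphisms into `j_*` via `adj₄`
  have hj4 : ∀ (W : B) (N : C), (∀ ψ : R.jUpperStar.obj W ⟶ N, ψ = 0) →
      ∀ φ : W ⟶ R.jStar.obj N, φ = 0 := by
    intro W N hψ φ
    have h0 : (R.adj₄.homEquiv W N).symm φ = 0 := hψ _
    have h1 := (R.adj₄.homEquiv W N).apply_symm_apply φ
    rw [h0] at h1
    rw [← h1, Adjunction.homEquiv_unit, Functor.map_zero, Limits.comp_zero]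
  constructor
  · -- isoClosed_left
    intro X Y e hX
    exact ⟨hA.isoClosed_left (R.iUpperStar.mapIso e) hX.1,
      hC.isoClosed_left (R.jUpperStar.mapIso e) hX.2⟩
  · -- isoClosed_right
    intro X Y e hX
    exact ⟨hA.isoClosed_right (R.iShriek.mapIso e) hX.1,
      hC.isoClosed_right (R.jUpperStar.mapIso e) hX.2⟩
  · -- exists_triangle
    intro X
    obtain ⟨U₂, V₂, hU₂, hV₂, u, v, w, hTC⟩ := hC.exists_triangle (R.jUpperStar.obj X)
    obtain ⟨Z, zx, hz, hTZ⟩ := distinguished_cocone_triangle₁ ((R.adj₄.homEquiv X V₂) v)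
    obtain ⟨U₁, V₁, hU₁, hV₁, u₁, q, w₁, hTA⟩ := hA.exists_triangle (R.iUpperStar.obj Z)
    obtain ⟨U, uz, hu, hTU⟩ := distinguished_cocone_triangle₁ ((R.adj₁.homEquiv Z V₁) q)
    obtain ⟨V, p, dV, hTV⟩ := distinguished_cocone_triangle (uz ≫ zx)
    -- the key vanishing
    have key : ∀ (W : B), (∀ φ' : W ⟶ R.jStar.obj V₂, φ' = 0) →
        (∀ φ' : W ⟶ R.iStar.obj V₁, φ' = 0) → ∀ φ : W ⟶ V, φ = 0 := by
      intro W hW1 hW2 φ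
      have hd : (φ ≫ dV) ≫ (shiftFunctor B (1 : ℤ)).map uz = 0 := by
        have he : ((φ ≫ dV) ≫ (shiftFunctor B (1 : ℤ)).map uz) ≫
            (shiftFunctor B (1 : ℤ)).map zx = 0 := by
          have h31 := comp_distTriang_mor_zero₃₁ _ hTV
          simp only [Category.assoc]
          rw [← Functor.map_comp]; exact (congrArg (φ ≫ ·) h31).trans Limits.comp_zero
        -- factor through `j_* V₂`
        obtain ⟨g', hg'⟩ := Triangle.coyoneda_exact₁ _ hTZ
          ((φ ≫ dV) ≫ (shiftFunctor B (1 : ℤ)).map uz) he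
        exact hg'.trans (by rw [hW1 g']; exact Limits.zero_comp)
      -- factor through `i_* V₁`
      have hφd : φ ≫ dV = 0 := by
        obtain ⟨g'', hg''⟩ := Triangle.coyoneda_exact₁ _ hTU (φ ≫ dV) hd
        exact hg''.trans (by rw [hW2 g'']; exact Limits.zero_comp)
      obtain ⟨ψ, hψ⟩ := Triangle.coyoneda_exact₃ _ hTV φ hφd
      obtain ⟨ψ', hψ'⟩ := Triangle.coyoneda_exact₂ _ hTZ ψ (hW1 _)
      obtain ⟨ψ'', hψ''⟩ := Triangle.coyoneda_exact₂ _ hTU ψ' (hW2 _)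
      have h12 := comp_distTriang_mor_zero₁₂ _ hTV
      rw [hψ, hψ', hψ'']
      exact (((Category.assoc _ _ _).trans (Category.assoc _ _ _)).trans (congrArg (ψ'' ≫ ·) ((Category.assoc uz zx p).symm.trans h12))).trans Limits.comp_zero
    refine ⟨U, V, ⟨?_, ?_⟩, ⟨?_, ?_⟩, uz ≫ zx, p, dV, hTV⟩
    · -- i^* U ∈ T₁
      obtain ⟨e₁⟩ := nonempty_iso₁_aux (R.iUpperStar.map_distinguished _ hTU) hTA
        (Iso.refl (R.iUpperStar.obj Z)) (@asIso _ _ _ _ (R.adj₁.counit.app V₁) (@NatIso.isIso_app_of_isIso _ _ _ _ _ _ _ (@Adjunction.counit_isIso_of_R_fully_faithful _ _ _ _ _ _ R.adj₁ R.iStar_full R.iStar_faithful) V₁))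
        (by dsimp
            show R.iUpperStar.map ((R.adj₁.homEquiv Z V₁) q) ≫ R.adj₁.counit.app V₁ = 𝟙 _ ≫ q
            rw [Category.id_comp]; exact (R.adj₁.homEquiv Z V₁).symm_apply_apply q)
      exact hA.isoClosed_left e₁.symm hU₁
    · -- j^* U ∈ T₂
      have hdist := R.jUpperStar.map_distinguished _ hTU
      have hiso : IsIso (R.jUpperStar.map uz) :=
        (Triangle.isZero₃_iff_isIso₁ _ hdist).1 (hzero_ji V₁)
      obtain ⟨e₂⟩ := nonempty_iso₁_aux (R.jUpperStar.map_distinguished _ hTZ) hTC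
        (Iso.refl (R.jUpperStar.obj X)) (@asIso _ _ _ _ (R.adj₄.counit.app V₂) (@NatIso.isIso_app_of_isIso _ _ _ _ _ _ _ (@Adjunction.counit_isIso_of_R_fully_faithful _ _ _ _ _ _ R.adj₄ R.jStar_full R.jStar_faithful) V₂))
        (by dsimp
            show R.jUpperStar.map ((R.adj₄.homEquiv X V₂) v) ≫ R.adj₄.counit.app V₂ = 𝟙 _ ≫ v
            rw [Category.id_comp]; exact (R.adj₄.homEquiv X V₂).symm_apply_apply v)
      exact hC.isoClosed_left (asIso (R.jUpperStar.map uz) ≪≫ e₂).symm hU₂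
    · -- i^! V ∈ F₁
      apply hA.mem_right_of_homzero
      intro W' hW' f
      have hmem : R.iShriek.obj (R.iStar.obj V₁) ∈ F₁ :=
        hA.isoClosed_right (asIso (R.adj₂.unit.app V₁)) hV₁
      have hφ : (R.adj₂.homEquiv W' V).symm f = 0 := by
        apply key
        · exact hj4 _ _ (fun ψ => (hzero_ji W').eq_of_src ψ 0)
        · exact hi2 _ _ (fun ψ => hA.hom_zero hW' hmem ψ)
      have h1 := (R.adj₂.homEquiv W' V).apply_symm_apply f
      rw [hφ] at h1
      rw [← h1, Adjunction.homEquiv_unit, Functor.map_zero, Limits.comp_zero]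
    · -- j^* V ∈ F₂
      apply hC.mem_right_of_homzero
      intro S hS f
      have hmem2 : R.jUpperStar.obj (R.jStar.obj V₂) ∈ F₂ :=
        hC.isoClosed_right (asIso (R.adj₄.counit.app V₂)).symm hV₂
      have hφ : (R.adj₃.homEquiv S V).symm f = 0 := by
        apply key
        · exact hj3 _ _ (fun ψ => hC.hom_zero hS hmem2 ψ)
        · exact hj3 _ _ (fun ψ => (hzero_ji V₁).eq_of_tgt ψ 0)
      have h1 := (R.adj₃.homEquiv S V).apply_symm_apply f
      rw [hφ] at h1
      rw [← h1, Adjunction.homEquiv_unit, Functor.map_zero, Limits.comp_zero]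
  · -- hom_zero
    intro X Y hX hY f
    obtain ⟨h, hT⟩ := R.triangle₂ X
    have h1 : R.adj₃.counit.app X ≫ f = 0 :=
      hj3 _ _ (fun ψ => hC.hom_zero hX.2 hY.2 ψ) _
    obtain ⟨g, hg⟩ := Triangle.yoneda_exact₂ _ hT f h1
    have hg0 : g = 0 := hi2 _ _ (fun ψ => hA.hom_zero hX.1 hY.1 ψ) g
    rw [hg, hg0, Limits.comp_zero]; rfl
  · -- shift_mem
    intro X hX
    exact ⟨hA.isoClosed_left ((R.iUpperStar.commShiftIso (1 : ℤ)).app X).symm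
        (hA.shift_mem hX.1),
      hC.isoClosed_left ((R.jUpperStar.commShiftIso (1 : ℤ)).app X).symm
        (hC.shift_mem hX.2)⟩


end RecollementFS
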